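/- Cardinality of simple permutations of mixed order 4n+2: let n ≥ 1 and let α = α_{2n+1}, β = β_{2n+1} be the two Stefan orbits of order 2n+1. Then the set of permutations θ of {1,…,4n+2} such that θ maps {1,…,2n+1} onto {2n+2,…,4n+2} and θ² is one of the four right pastings α ◇| α, α ◇| β, β ◇| α, β ◇| β has exactly 8n+4 elements. -/

import Mathlib

/-- Right pasting `α ◇| β`: the permutation of `{1,…,m+n}` with
`(α ◇| β)(i) = α(i)` for `1 ≤ i ≤ m` and `(α ◇| β)(m+i) = β(i) + m` for `1 ≤ i ≤ n`. -/
def pasteRight {m n : ℕ} (α : Equiv.Perm (Fin m)) (β : Equiv.Perm (Fin n)) :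
    Equiv.Perm (Fin (m + n)) :=
  finSumFinEquiv.symm.trans ((Equiv.sumCongr α β).trans finSumFinEquiv)

/-- Transport a permutation of `Fin ((2n+1)+(2n+1))` to one of `Fin (4n+2)`. -/
def toPerm42 (n : ℕ) (σ : Equiv.Perm (Fin (2 * n + 1 + (2 * n + 1)))) :
    Equiv.Perm (Fin (4 * n + 2)) :=
  (finCongr (by omega : 2 * n + 1 + (2 * n + 1) = 4 * n + 2)).permCongr σ

/-- The "block swap" permutation built from `f, g`. -/
def swapPaste {N : ℕ} (f g : Equiv.Perm (Fin N)) : Equiv.Perm (Fin (N + N)) :=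
  finSumFinEquiv.symm.trans ((Equiv.sumCongr f g).trans
    ((Equiv.sumComm (Fin N) (Fin N)).trans finSumFinEquiv))

lemma pasteRight_castAdd {m n : ℕ} (α : Equiv.Perm (Fin m)) (β : Equiv.Perm (Fin n)) (x : Fin m) :
    pasteRight α β (Fin.castAdd n x) = Fin.castAdd n (α x) := by
  simp [pasteRight]

lemma pasteRight_natAdd {m n : ℕ} (α : Equiv.Perm (Fin m)) (β : Equiv.Perm (Fin n)) (x : Fin n) :
    pasteRight α β (Fin.natAdd m x) = Fin.natAdd m (β x) := by
  simp [pasteRight]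

lemma castAdd_inj' {m n : ℕ} : Function.Injective (Fin.castAdd n : Fin m → Fin (m + n)) := by
  intro a b h
  have := congrArg Fin.val h
  simp only [Fin.coe_castAdd] at this
  exact Fin.ext this

lemma natAdd_inj' {m n : ℕ} : Function.Injective (Fin.natAdd m : Fin n → Fin (m + n)) := by
  intro a b h
  have := congrArg Fin.val h
  simp only [Fin.coe_natAdd] at this
  exact Fin.ext (by omega)

lemma swapPaste_castAdd {N : ℕ} (f g : Equiv.Perm (Fin N)) (x : Fin N) :
    swapPaste f g (Fin.castAdd N x) = Fin.natAdd N (f x) := by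
  rw [swapPaste, Equiv.trans_apply, Equiv.trans_apply, Equiv.trans_apply,
    finSumFinEquiv_symm_apply_castAdd, Equiv.sumCongr_apply, Sum.map_inl,
    Equiv.sumComm_apply, Sum.swap_inl, finSumFinEquiv_apply_right]

lemma swapPaste_natAdd {N : ℕ} (f g : Equiv.Perm (Fin N)) (x : Fin N) :
    swapPaste f g (Fin.natAdd N x) = Fin.castAdd N (g x) := by
  rw [swapPaste, Equiv.trans_apply, Equiv.trans_apply, Equiv.trans_apply,
    finSumFinEquiv_symm_apply_natAdd, Equiv.sumCongr_apply, Sum.map_inr,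
    Equiv.sumComm_apply, Sum.swap_inr, finSumFinEquiv_apply_left]

lemma swapPaste_sq {N : ℕ} (f g : Equiv.Perm (Fin N)) :
    (swapPaste f g) ^ 2 = pasteRight (g * f) (f * g) := by
  ext x : 1
  induction x using Fin.addCases with
  | left i =>
    rw [pow_two, Equiv.Perm.mul_apply, swapPaste_castAdd, swapPaste_natAdd,
      pasteRight_castAdd, Equiv.Perm.mul_apply]
  | right i =>
    rw [pow_two, Equiv.Perm.mul_apply, swapPaste_natAdd, swapPaste_castAdd,
      pasteRight_natAdd, Equiv.Perm.mul_apply]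

lemma pasteRight_injective {m n : ℕ} {α α' : Equiv.Perm (Fin m)} {β β' : Equiv.Perm (Fin n)}
    (h : pasteRight α β = pasteRight α' β') : α = α' ∧ β = β' := by
  constructor
  · ext x : 1
    have := congrArg (fun σ : Equiv.Perm (Fin (m+n)) => σ (Fin.castAdd n x)) h
    simp only [pasteRight_castAdd] at this
    exact castAdd_inj' this
  · ext x : 1
    have := congrArg (fun σ : Equiv.Perm (Fin (m+n)) => σ (Fin.natAdd m x)) h
    simp only [pasteRight_natAdd] at this
    exact natAdd_inj' this

lemma swapPaste_injective {N : ℕ} {f f' g g' : Equiv.Perm (Fin N)}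
    (h : swapPaste f g = swapPaste f' g') : f = f' ∧ g = g' := by
  constructor
  · ext x : 1
    have := congrArg (fun σ : Equiv.Perm (Fin (N+N)) => σ (Fin.castAdd N x)) h
    simp only [swapPaste_castAdd] at this
    exact natAdd_inj' this
  · ext x : 1
    have := congrArg (fun σ : Equiv.Perm (Fin (N+N)) => σ (Fin.natAdd N x)) h
    simp only [swapPaste_natAdd] at this
    exact castAdd_inj' this

lemma swapPaste_image {N : ℕ} (f g : Equiv.Perm (Fin N)) :
    ⇑(swapPaste f g) '' {x : Fin (N + N) | (x : ℕ) < N} = {x : Fin (N + N) | N ≤ (x : ℕ)} := by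
  ext x
  constructor
  · rintro ⟨y, hy, rfl⟩
    have : y = Fin.castAdd N ⟨(y : ℕ), hy⟩ := by ext; simp
    rw [this, swapPaste_castAdd]
    simp [Fin.natAdd]
  · intro hx
    refine ⟨Fin.castAdd N (f⁻¹ ⟨(x : ℕ) - N, by omega⟩), by simp [Fin.castAdd], ?_⟩
    rw [swapPaste_castAdd]
    simp only [← Equiv.Perm.mul_apply, mul_inv_cancel, Equiv.Perm.one_apply]
    ext
    simp only [Fin.natAdd]
    simp only [Set.mem_setOf_eq] at hx
    omega

lemma commute_eq_pow {N : ℕ} {γ f : Equiv.Perm (Fin N)} {pt : Fin N}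
    (hp : ∀ x, ∃ m : ℕ, (γ ^ m) pt = x) (hc : f * γ = γ * f) : ∃ j : ℕ, f = γ ^ j := by
  obtain ⟨m, hm⟩ := hp (f pt)
  refine ⟨m, ?_⟩
  ext x : 1
  obtain ⟨k, rfl⟩ := hp x
  have hc' : Commute f γ := hc
  have hck : f * γ ^ k = γ ^ k * f := (hc'.pow_right k).eq
  calc f ((γ ^ k) pt) = (f * γ ^ k) pt := rfl
    _ = (γ ^ k * f) pt := by rw [hck]
    _ = (γ ^ k) (f pt) := rfl
    _ = (γ ^ k) ((γ ^ m) pt) := by rw [hm]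
    _ = (γ ^ k * γ ^ m) pt := rfl
    _ = (γ ^ m * γ ^ k) pt := by rw [pow_mul_comm]
    _ = (γ ^ m) ((γ ^ k) pt) := rfl

/-- `γ a` chooses between the two Stefan cycles. -/
def gam {N : ℕ} (α β : Equiv.Perm (Fin N)) : Bool → Equiv.Perm (Fin N) :=
  fun a => if a then β else α

/-- conjugator choice -/
def cc {N : ℕ} (r : Equiv.Perm (Fin N)) : Bool → Bool → Equiv.Perm (Fin N) :=
  fun a b => if a = b then 1 else r

/-- The parametrization of the solution set. -/
def FF {N : ℕ} (α β r : Equiv.Perm (Fin N)) (x : Bool × Bool × Fin N) :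
    Equiv.Perm (Fin (N + N)) :=
  swapPaste (cc r x.1 x.2.1 * (gam α β x.1) ^ ((x.2.2 : ℕ)))
    (gam α β x.1 * (cc r x.1 x.2.1 * (gam α β x.1) ^ ((x.2.2 : ℕ)))⁻¹)

lemma core {N : ℕ} (α β r : Equiv.Perm (Fin N)) (pα pβ : Fin N)
    (hpα : ∀ x, ∃ m : ℕ, (α ^ m) pα = x) (hpβ : ∀ x, ∃ m : ℕ, (β ^ m) pβ = x)
    (hordα : orderOf α = N) (hordβ : orderOf β = N)
    (hrαβ : r * α * r⁻¹ = β) (hrr : r⁻¹ = r) (hab : α ≠ β) :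
    Set.ncard {σ : Equiv.Perm (Fin (N + N)) |
      ⇑σ '' {x : Fin (N + N) | (x : ℕ) < N} = {x : Fin (N + N) | N ≤ (x : ℕ)} ∧
      (σ ^ 2 = pasteRight α α ∨ σ ^ 2 = pasteRight α β ∨
        σ ^ 2 = pasteRight β α ∨ σ ^ 2 = pasteRight β β)} = 4 * N := by
  have hNpos : 0 < N := by
    rw [← hordα]; exact orderOf_pos α
  have hr1 : r * r = 1 := by
    nth_rewrite 2 [← hrr]
    exact mul_inv_cancel r
  have hrβα : r * β * r⁻¹ = α := by
    rw [← hrαβ, hrr]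
    have h : r * (r * α * r) * r = (r * r) * α * (r * r) := by group
    rw [h, hr1, one_mul, mul_one]
  have hγord : ∀ a, orderOf (gam α β a) = N := by
    intro a; cases a
    · exact hordα
    · exact hordβ
  have hγp : ∀ a, ∃ pt : Fin N, ∀ x, ∃ m : ℕ, ((gam α β a) ^ m) pt = x := by
    intro a; cases a
    · exact ⟨pα, hpα⟩
    · exact ⟨pβ, hpβ⟩
  have hcγ : ∀ a b, cc r a b * gam α β a * (cc r a b)⁻¹ = gam α β b := by
    intro a b
    cases a <;> cases b <;>
      simp [cc, gam, hrαβ, hrβα]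
  have hFsq : ∀ x : Bool × Bool × Fin N,
      (FF α β r x) ^ 2 = pasteRight (gam α β x.1) (gam α β x.2.1) := by
    rintro ⟨a, b, j⟩
    rw [FF, swapPaste_sq]
    congr 1
    · exact inv_mul_cancel_right _ _
    · set c := cc r a b
      set γ := gam α β a
      have h : c * γ ^ (j : ℕ) * (γ * (c * γ ^ (j : ℕ))⁻¹) =
          c * (γ ^ (j : ℕ) * γ * (γ ^ (j : ℕ))⁻¹) * c⁻¹ := by group
      rw [h, pow_mul_comm', mul_inv_cancel_right]
      exact hcγ a b
  -- the set is the range of FF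
  have hrange : {σ : Equiv.Perm (Fin (N + N)) |
      ⇑σ '' {x : Fin (N + N) | (x : ℕ) < N} = {x : Fin (N + N) | N ≤ (x : ℕ)} ∧
      (σ ^ 2 = pasteRight α α ∨ σ ^ 2 = pasteRight α β ∨
        σ ^ 2 = pasteRight β α ∨ σ ^ 2 = pasteRight β β)} = Set.range (FF α β r) := by
    ext σ
    constructor
    · rintro ⟨h1, h2⟩
      -- build f and g with σ = swapPaste f g
      have hup : ∀ y : Fin (N + N), (y : ℕ) < N → N ≤ ((σ y : Fin (N + N)) : ℕ) := by
        intro y hy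
        have : σ y ∈ {x : Fin (N + N) | N ≤ (x : ℕ)} := h1 ▸ ⟨y, hy, rfl⟩
        exact this
      have hdown : ∀ y : Fin (N + N), N ≤ (y : ℕ) → ((σ y : Fin (N + N)) : ℕ) < N := by
        intro y hy
        by_contra hcon
        push_neg at hcon
        have : σ y ∈ {x : Fin (N + N) | N ≤ (x : ℕ)} := hcon
        rw [← h1] at this
        obtain ⟨z, hz, hzy⟩ := this
        have : z = y := σ.injective hzy
        subst this
        simp only [Set.mem_setOf_eq] at hz
        omega
      have finj : Function.Injective
          (fun x : Fin N => (⟨(σ (Fin.castAdd N x) : ℕ) - N, by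
            have h1 := hup (Fin.castAdd N x) (by simp)
            have h2 := (σ (Fin.castAdd N x)).isLt
            omega⟩ : Fin N)) := by
        intro x y hxy
        have hv := congrArg Fin.val hxy
        simp only at hv
        have hx := hup (Fin.castAdd N x) (by simp)
        have hy := hup (Fin.castAdd N y) (by simp)
        have : σ (Fin.castAdd N x) = σ (Fin.castAdd N y) := Fin.ext (by omega)
        exact castAdd_inj' (σ.injective this)
      have ginj : Function.Injective
          (fun x : Fin N => (⟨(σ (Fin.natAdd N x) : ℕ), by
            exact hdown (Fin.natAdd N x) (by simp)⟩ : Fin N)) := by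
        intro x y hxy
        have hv := congrArg Fin.val hxy
        simp only at hv
        have : σ (Fin.natAdd N x) = σ (Fin.natAdd N y) := Fin.ext hv
        exact natAdd_inj' (σ.injective this)
      set f : Equiv.Perm (Fin N) :=
        Equiv.ofBijective _ (Finite.injective_iff_bijective.mp finj) with hfdef
      set g : Equiv.Perm (Fin N) :=
        Equiv.ofBijective _ (Finite.injective_iff_bijective.mp ginj) with hgdef
      have hfval : ∀ x : Fin N, ((f x : Fin N) : ℕ) = (σ (Fin.castAdd N x) : ℕ) - N := by
        intro x; rw [hfdef, Equiv.ofBijective_apply]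
      have hgval : ∀ x : Fin N, ((g x : Fin N) : ℕ) = (σ (Fin.natAdd N x) : ℕ) := by
        intro x; rw [hgdef, Equiv.ofBijective_apply]
      have hσ : σ = swapPaste f g := by
        ext y : 1
        induction y using Fin.addCases with
        | left i =>
          rw [swapPaste_castAdd]
          apply Fin.ext
          have h1 := hup (Fin.castAdd N i) (by simp)
          have h2 := hfval i
          simp only [Fin.coe_natAdd]
          omega
        | right i =>
          rw [swapPaste_natAdd]
          apply Fin.ext
          have h2 := hgval i
          simp only [Fin.coe_castAdd]
          omega
      -- identify the pair (a, b)
      have key : ∀ a b : Bool, g * f = gam α β a → f * g = gam α β b →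
          σ ∈ Set.range (FF α β r) := by
        intro a b hgf hfg
        have hg : g = gam α β a * f⁻¹ := by rw [← hgf, mul_inv_cancel_right]
        have hconj : f * gam α β a * f⁻¹ = gam α β b := by
          rw [← hgf, ← hfg]
          group
        have hfγ : f * gam α β a = gam α β b * f := by
          rw [← hconj]; group
        have hcγb : (cc r a b)⁻¹ * gam α β b = gam α β a * (cc r a b)⁻¹ := by
          rw [← hcγ a b]; group
        have hcm : ((cc r a b)⁻¹ * f) * gam α β a = gam α β a * ((cc r a b)⁻¹ * f) := by
          calc ((cc r a b)⁻¹ * f) * gam α β a = (cc r a b)⁻¹ * (f * gam α β a) := by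
                rw [mul_assoc]
            _ = (cc r a b)⁻¹ * (gam α β b * f) := by rw [hfγ]
            _ = ((cc r a b)⁻¹ * gam α β b) * f := by rw [mul_assoc]
            _ = (gam α β a * (cc r a b)⁻¹) * f := by rw [hcγb]
            _ = gam α β a * ((cc r a b)⁻¹ * f) := by rw [mul_assoc]
        obtain ⟨pt, hpt⟩ := hγp a
        obtain ⟨m, hm⟩ := commute_eq_pow hpt hcm
        refine ⟨(a, b, ⟨m % N, Nat.mod_lt _ hNpos⟩), ?_⟩
        have hpow : (gam α β a) ^ (m % N) = (gam α β a) ^ m := by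
          rw [show m % N = m % orderOf (gam α β a) by rw [hγord a], pow_mod_orderOf]
        have hf0 : cc r a b * (gam α β a) ^ (m % N) = f := by
          rw [hpow, ← hm, mul_inv_cancel_left]
        rw [hσ, FF]
        simp only
        rw [hf0, ← hg]
      rw [hσ, swapPaste_sq] at h2
      rcases h2 with h2 | h2 | h2 | h2
      · obtain ⟨hgf, hfg⟩ := pasteRight_injective h2
        exact key false false hgf hfg
      · obtain ⟨hgf, hfg⟩ := pasteRight_injective h2
        exact key false true hgf hfg
      · obtain ⟨hgf, hfg⟩ := pasteRight_injective h2
        exact key true false hgf hfg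
      · obtain ⟨hgf, hfg⟩ := pasteRight_injective h2
        exact key true true hgf hfg
    · rintro ⟨⟨a, b, j⟩, rfl⟩
      constructor
      · rw [FF]; exact swapPaste_image _ _
      · rw [hFsq ⟨a, b, j⟩]
        cases a <;> cases b <;> simp [gam]
  -- injectivity of FF
  have hFinj : Function.Injective (FF α β r) := by
    rintro ⟨a, b, j⟩ ⟨a', b', j'⟩ h
    have hsq := congrArg (· ^ 2) h
    rw [hFsq ⟨a, b, j⟩, hFsq ⟨a', b', j'⟩] at hsq
    obtain ⟨h1, h2⟩ := pasteRight_injective hsq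
    have ha : a = a' := by
      cases a <;> cases a' <;> simp [gam] at h1 <;> first
        | rfl
        | exact absurd h1 hab
        | exact absurd h1.symm hab
    have hb : b = b' := by
      cases b <;> cases b' <;> simp [gam] at h2 <;> first
        | rfl
        | exact absurd h2 hab
        | exact absurd h2.symm hab
    subst ha; subst hb
    obtain ⟨hf, -⟩ := swapPaste_injective h
    have hj : (gam α β a) ^ (j : ℕ) = (gam α β a) ^ ((j' : ℕ)) := mul_left_cancel hf
    have : (j : ℕ) = (j' : ℕ) := by
      refine pow_injOn_Iio_orderOf ?_ ?_ hj
      · simp only [Set.mem_Iio, hγord a]; exact j.isLt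
      · simp only [Set.mem_Iio, hγord a]; exact j'.isLt
    exact Prod.ext rfl (Prod.ext rfl (Fin.ext this))
  rw [hrange, ← Nat.card_coe_set_eq, Nat.card_range_of_injective hFinj,
    Nat.card_eq_fintype_card]
  simp only [Fintype.card_prod, Fintype.card_bool, Fintype.card_fin]
  ring

lemma permCongr_refl_apply {α : Type*} (σ : Equiv.Perm α) :
    (Equiv.refl α).permCongr σ = σ := by
  ext x; simp [Equiv.permCongr_apply]


/-- Cardinality of simple permutations of mixed order `4n+2`: with `α = α_{2n+1}` and
`β = β_{2n+1}` the two Stefan orbits (characterized 1-indexed by the hypotheses, where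
`i : Fin (2*n+1)` represents the point `(i : ℕ) + 1`), the set of permutations `θ` of
`{1,…,4n+2}` mapping `{1,…,2n+1}` onto `{2n+2,…,4n+2}` whose square is one of the four
right pastings `α ◇| α`, `α ◇| β`, `β ◇| α`, `β ◇| β` has exactly `8n+4` elements. -/
theorem card_simple_mixed_order (n : ℕ) (hn : 1 ≤ n)
    (α β : Equiv.Perm (Fin (2 * n + 1)))
    (hα1 : ∀ i : Fin (2 * n + 1), 1 ≤ (i : ℕ) + 1 → (i : ℕ) + 1 ≤ n →
      (α i : ℕ) + 1 = 2 * n + 2 - ((i : ℕ) + 1))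
    (hα2 : ∀ i : Fin (2 * n + 1), n + 1 ≤ (i : ℕ) + 1 → (i : ℕ) + 1 ≤ 2 * n →
      (α i : ℕ) + 1 = 2 * n + 1 - ((i : ℕ) + 1))
    (hα3 : ∀ i : Fin (2 * n + 1), (i : ℕ) + 1 = 2 * n + 1 → (α i : ℕ) + 1 = n + 1)
    (hβ1 : ∀ i : Fin (2 * n + 1), (i : ℕ) + 1 = 1 → (β i : ℕ) + 1 = n + 1)
    (hβ2 : ∀ i : Fin (2 * n + 1), 2 ≤ (i : ℕ) + 1 → (i : ℕ) + 1 ≤ n + 1 →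
      (β i : ℕ) + 1 = 2 * n + 3 - ((i : ℕ) + 1))
    (hβ3 : ∀ i : Fin (2 * n + 1), n + 2 ≤ (i : ℕ) + 1 → (i : ℕ) + 1 ≤ 2 * n + 1 →
      (β i : ℕ) + 1 = 2 * n + 2 - ((i : ℕ) + 1)) :
    Set.ncard {θ : Equiv.Perm (Fin (4 * n + 2)) |
      ⇑θ '' {x : Fin (4 * n + 2) | (x : ℕ) < 2 * n + 1} =
        {x : Fin (4 * n + 2) | 2 * n + 1 ≤ (x : ℕ)} ∧
      (θ ^ 2 = toPerm42 n (pasteRight α α) ∨ θ ^ 2 = toPerm42 n (pasteRight α β) ∨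
        θ ^ 2 = toPerm42 n (pasteRight β α) ∨ θ ^ 2 = toPerm42 n (pasteRight β β))} =
      8 * n + 4 := by
  -- 0-indexed descriptions
  have hA1 : ∀ i : Fin (2 * n + 1), (i : ℕ) < n → (α i : ℕ) = 2 * n - (i : ℕ) := by
    intro i hi; have := hα1 i (by omega) (by omega); omega
  have hA2 : ∀ i : Fin (2 * n + 1), n ≤ (i : ℕ) → (i : ℕ) < 2 * n →
      (α i : ℕ) = 2 * n - 1 - (i : ℕ) := by
    intro i h1 h2; have := hα2 i (by omega) (by omega); omega
  have hA3 : ∀ i : Fin (2 * n + 1), (i : ℕ) = 2 * n → (α i : ℕ) = n := by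
    intro i h1; have := hα3 i (by omega); omega
  have hB1 : ∀ i : Fin (2 * n + 1), (i : ℕ) = 0 → (β i : ℕ) = n := by
    intro i h1; have := hβ1 i (by omega); omega
  have hB2 : ∀ i : Fin (2 * n + 1), 1 ≤ (i : ℕ) → (i : ℕ) ≤ n →
      (β i : ℕ) = 2 * n + 1 - (i : ℕ) := by
    intro i h1 h2; have := hβ2 i (by omega) (by omega); omega
  have hB3 : ∀ i : Fin (2 * n + 1), n + 1 ≤ (i : ℕ) → (β i : ℕ) = 2 * n - (i : ℕ) := by
    intro i h1; have := hβ3 i (by omega) (by omega); omega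
  have hp0 : n < 2 * n + 1 := by omega
  -- the α-orbit of n covers everything
  have horb : ∀ k : ℕ, k ≤ n →
      (((α ^ (2 * k)) ⟨n, hp0⟩ : ℕ) = n + k ∧
      (1 ≤ k → ((α ^ (2 * k - 1)) ⟨n, hp0⟩ : ℕ) = n - k)) := by
    intro k
    induction k with
    | zero => intro _; exact ⟨by simp, by omega⟩
    | succ k ih =>
      intro hk1
      have ih1 := (ih (by omega)).1
      have e1 : ((α ^ (2 * k + 1)) ⟨n, hp0⟩ : ℕ) = n - (k + 1) := by
        rw [pow_succ', Equiv.Perm.mul_apply]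
        have := hA2 ((α ^ (2 * k)) ⟨n, hp0⟩) (by omega) (by omega)
        omega
      have e2 : ((α ^ (2 * k + 1 + 1)) ⟨n, hp0⟩ : ℕ) = n + (k + 1) := by
        rw [pow_succ', Equiv.Perm.mul_apply]
        have := hA1 ((α ^ (2 * k + 1)) ⟨n, hp0⟩) (by omega)
        omega
      constructor
      · rw [show 2 * (k + 1) = 2 * k + 1 + 1 by omega]; exact e2
      · intro _
        rw [show 2 * (k + 1) - 1 = 2 * k + 1 by omega]; exact e1
  have hpα : ∀ x : Fin (2 * n + 1), ∃ m : ℕ, (α ^ m) ⟨n, hp0⟩ = x := by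
    intro x
    have hx := x.isLt
    rcases le_or_gt n (x : ℕ) with h | h
    · refine ⟨2 * ((x : ℕ) - n), ?_⟩
      have := (horb ((x : ℕ) - n) (by omega)).1
      exact Fin.ext (by omega)
    · refine ⟨2 * (n - (x : ℕ)) - 1, ?_⟩
      have := (horb (n - (x : ℕ)) (by omega)).2 (by omega)
      exact Fin.ext (by omega)
  have hfix : ∀ x : Fin (2 * n + 1), α x ≠ x := by
    intro x hx
    have hxv : (α x : ℕ) = (x : ℕ) := congrArg Fin.val hx
    have hlt := x.isLt
    rcases lt_or_ge (x : ℕ) n with h | h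
    · have := hA1 x h; omega
    · rcases lt_or_ge (x : ℕ) (2 * n) with h2 | h2
      · have := hA2 x h h2; omega
      · have := hA3 x (by omega); omega
  have hcycα : α.IsCycle := by
    refine ⟨⟨n, hp0⟩, hfix _, fun y _ => ?_⟩
    obtain ⟨m, hm⟩ := hpα y
    exact ⟨(m : ℤ), by rw [zpow_natCast]; exact hm⟩
  have hordα : orderOf α = 2 * n + 1 := by
    rw [hcycα.orderOf]
    have : α.support = Finset.univ :=
      Finset.eq_univ_iff_forall.mpr fun x => Equiv.Perm.mem_support.mpr (hfix x)
    rw [this]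
    simp
  -- reversal conjugates α to β
  have hrev : ∀ j : Fin (2 * n + 1), ((Fin.revPerm j : Fin (2 * n + 1)) : ℕ) = 2 * n - (j : ℕ) := by
    intro j
    have := j.isLt
    show ((j.rev : Fin (2 * n + 1)) : ℕ) = 2 * n - (j : ℕ)
    rw [Fin.val_rev]
    omega
  have hβconj : β = Fin.revPerm * α * Fin.revPerm := by
    ext i : 1
    apply Fin.ext
    rw [Equiv.Perm.mul_apply, Equiv.Perm.mul_apply, hrev]
    have hri : ((Fin.revPerm i : Fin (2 * n + 1)) : ℕ) = 2 * n - (i : ℕ) := hrev i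
    have hi := i.isLt
    rcases eq_or_ne (i : ℕ) 0 with h0 | h0
    · have h1 := hB1 i h0
      have h2 := hA3 (Fin.revPerm i) (by omega)
      omega
    · rcases le_or_gt (i : ℕ) n with h1 | h1
      · have h2 := hB2 i (by omega) h1
        have h3 := hA2 (Fin.revPerm i) (by omega) (by omega)
        omega
      · have h2 := hB3 i (by omega)
        have h3 := hA1 (Fin.revPerm i) (by omega)
        omega
  have hrr : (Fin.revPerm : Equiv.Perm (Fin (2 * n + 1)))⁻¹ = Fin.revPerm := by
    ext j : 1
    show Fin.revPerm.symm j = _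
    simp
  have hrαβ : Fin.revPerm * α * (Fin.revPerm : Equiv.Perm (Fin (2 * n + 1)))⁻¹ = β := by
    rw [hrr]; exact hβconj.symm
  have hordβ : orderOf β = 2 * n + 1 := by
    have hsemi : SemiconjBy (Fin.revPerm : Equiv.Perm (Fin (2 * n + 1))) α β := by
      show Fin.revPerm * α = β * Fin.revPerm
      rw [hβconj]
      have hr1 : (Fin.revPerm : Equiv.Perm (Fin (2 * n + 1))) * Fin.revPerm = 1 := by
        rw [← hrr]; exact inv_mul_cancel _
      rw [mul_assoc, mul_assoc, hr1, mul_one]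
    rw [← SemiconjBy.orderOf_eq _ hsemi]
    exact hordα
  have hpβ : ∀ x : Fin (2 * n + 1), ∃ m : ℕ, (β ^ m) (Fin.revPerm ⟨n, hp0⟩) = x := by
    intro x
    obtain ⟨m, hm⟩ := hpα (Fin.revPerm x)
    refine ⟨m, ?_⟩
    have hβm : β ^ m = Fin.revPerm * α ^ m * (Fin.revPerm : Equiv.Perm (Fin (2 * n + 1)))⁻¹ := by
      rw [← hrαβ, conj_pow]
    rw [hβm, hrr]
    rw [Equiv.Perm.mul_apply, Equiv.Perm.mul_apply]
    have : (Fin.revPerm : Equiv.Perm (Fin (2 * n + 1))) (Fin.revPerm ⟨n, hp0⟩) = ⟨n, hp0⟩ := by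
      simp
    rw [this, hm]
    simp
  have hab : α ≠ β := by
    intro h
    have hi0 : 2 * n < 2 * n + 1 := by omega
    have hvi : ((⟨2 * n, hi0⟩ : Fin (2 * n + 1)) : ℕ) = 2 * n := rfl
    have h1 := hA3 ⟨2 * n, hi0⟩ hvi
    have h2 := hB3 ⟨2 * n, hi0⟩ (by omega)
    rw [h] at h1
    omega
  -- transport to `Fin (2n+1 + (2n+1))`
  suffices H : ∀ (M : ℕ) (hM : 2 * n + 1 + (2 * n + 1) = M),
      Set.ncard {θ : Equiv.Perm (Fin M) |
        ⇑θ '' {x : Fin M | (x : ℕ) < 2 * n + 1} = {x : Fin M | 2 * n + 1 ≤ (x : ℕ)} ∧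
        (θ ^ 2 = (finCongr hM).permCongr (pasteRight α α) ∨
          θ ^ 2 = (finCongr hM).permCongr (pasteRight α β) ∨
          θ ^ 2 = (finCongr hM).permCongr (pasteRight β α) ∨
          θ ^ 2 = (finCongr hM).permCongr (pasteRight β β))} = 8 * n + 4 by
    exact H (4 * n + 2) (by omega)
  intro M hM
  subst hM
  simp only [finCongr_refl, permCongr_refl_apply]
  rw [show 8 * n + 4 = 4 * (2 * n + 1) by omega]
  exact core α β Fin.revPerm ⟨n, hp0⟩ (Fin.revPerm ⟨n, hp0⟩) hpα hpβ hordα hordβ hrαβ hrr hab
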